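/- For the blow-up S_2 of ℙ² in 2 points, Peyre's constant is α(S_2) = 1/24; that is, 3 · vol{x ∈ ℝ³ : B(E, x) ≥ 0 for every (−1)-class E, and 0 ≤ B(−K_2, x) ≤ 1} = 1/24, where vol is the standard Lebesgue measure on ℝ³ and the (−1)-classes are exactly (0,1,0), (0,0,1), and (1,−1,−1). -/

import Mathlib

open scoped BigOperators
open MeasureTheory

/-- Intersection form on `ℤ^(n+1)` with basis `H, E₁, …, E_n`:
`B(x,y) = x₀y₀ - x₁y₁ - ⋯ - x_n y_n` (written as `2x₀y₀ - ∑ᵢ xᵢyᵢ`). -/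
def interZ {n : ℕ} (x y : Fin (n + 1) → ℤ) : ℤ :=
  2 * x 0 * y 0 - ∑ i, x i * y i

/-- The real intersection form on `ℝ^(n+1)`. -/
def interR {n : ℕ} (x y : Fin (n + 1) → ℝ) : ℝ :=
  2 * x 0 * y 0 - ∑ i, x i * y i

/-- The anticanonical class `-K = (3, -1, …, -1)`. -/
def antiK (n : ℕ) : Fin (n + 1) → ℤ := fun i => if i = 0 then 3 else -1

/-- The anticanonical class as a real vector. -/
def antiKR (n : ℕ) : Fin (n + 1) → ℝ := fun i => if i = 0 then 3 else -1

/-- A `(-1)`-class: `B(E,E) = -1` and `B(-K,E) = 1`. -/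
def IsMinusOneClass {n : ℕ} (E : Fin (n + 1) → ℤ) : Prop :=
  interZ E E = -1 ∧ interZ (antiK n) E = 1

/-- The nef cone: real vectors pairing nonnegatively with every `(-1)`-class. -/
def NefCone (n : ℕ) : Set (Fin (n + 1) → ℝ) :=
  {x | ∀ E : Fin (n + 1) → ℤ, IsMinusOneClass E → 0 ≤ interR (fun i => (E i : ℝ)) x}

open Set

/-- Classification of `(-1)`-classes on the blow-up of `ℙ²` in two points. -/
lemma alphaS2_classify {E : Fin (2 + 1) → ℤ} (h : IsMinusOneClass E) :
    (E 0 = 0 ∧ E 1 = 1 ∧ E 2 = 0) ∨ (E 0 = 0 ∧ E 1 = 0 ∧ E 2 = 1) ∨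
    (E 0 = 1 ∧ E 1 = -1 ∧ E 2 = -1) := by
  obtain ⟨h1, h2⟩ := h
  simp [interZ, antiK, Fin.sum_univ_succ] at h1 h2
  obtain ⟨a, b, c, ha, hb, hc⟩ : ∃ a b c : ℤ, E 0 = a ∧ E 1 = b ∧ E 2 = c :=
    ⟨_, _, _, rfl, rfl, rfl⟩
  rw [ha, hb, hc] at h1 h2 ⊢
  have hs : a * a - b * b - c * c = -1 := by linarith
  have hk : 3 * a + b + c = 1 := by linarith
  clear h1 h2
  have ha0 : 0 ≤ a := by nlinarith [sq_nonneg (b - c), sq_nonneg (b + c)]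
  have ha1 : a ≤ 1 := by nlinarith [sq_nonneg (b - c)]
  interval_cases a
  · have hbc : b * c = 0 := by nlinarith
    rcases mul_eq_zero.mp hbc with h | h
    · right; left; omega
    · left; omega
  · have hbc : b * c = 1 := by nlinarith
    have := Int.eq_one_or_neg_one_of_mul_eq_one' hbc
    right; right; omega

lemma alphaS2_L1 (c : ℝ) :
    ∫⁻ v in Iic (0:ℝ), ENNReal.ofReal ((c + 2*v)/3) = ENNReal.ofReal ((max c 0)^2/12) := by
  rcases le_or_gt c 0 with hc | hc
  · rw [max_eq_right hc]
    rw [show (∫⁻ v in Iic (0:ℝ), ENNReal.ofReal ((c + 2*v)/3)) = ∫⁻ _ in Iic (0:ℝ), 0 from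
      setLIntegral_congr_fun measurableSet_Iic (fun v hv => by
        rw [ENNReal.ofReal_eq_zero]; nlinarith [mem_Iic.mp hv])]
    simp
  · rw [max_eq_left hc.le]
    have h2 : (-(c/2) : ℝ) ≤ 0 := by linarith
    rw [← Iic_union_Ioc_eq_Iic h2, lintegral_union measurableSet_Ioc (Iic_disjoint_Ioc le_rfl)]
    rw [show (∫⁻ v in Iic (-(c/2):ℝ), ENNReal.ofReal ((c + 2*v)/3)) = ∫⁻ _ in Iic (-(c/2):ℝ), 0 from
      setLIntegral_congr_fun measurableSet_Iic (fun v hv => by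
        rw [ENNReal.ofReal_eq_zero]; nlinarith [mem_Iic.mp hv])]
    rw [lintegral_zero, zero_add]
    rw [← ofReal_integral_eq_lintegral_ofReal]
    · rw [← intervalIntegral.integral_of_le h2]
      rw [intervalIntegral.integral_eq_sub_of_hasDerivAt (f := fun v => (c*v + v^2)/3)
        (fun x _ => by
          have : HasDerivAt (fun v : ℝ => (c*v + v^2)/3) ((c*1 + 2*x)/3) x := by
            exact (((hasDerivAt_id x).const_mul c).add (by simpa using hasDerivAt_pow 2 x)).div_const 3
          simpa using this)]
      · norm_num; ring_nf
      · apply Continuous.intervalIntegrable; continuity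
    · apply Continuous.integrableOn_Ioc; continuity
    · filter_upwards [ae_restrict_mem measurableSet_Ioc] with v hv
      have := hv.1; dsimp at this ⊢; nlinarith

lemma alphaS2_L2 :
    ∫⁻ u in Iic (0:ℝ), ENNReal.ofReal ((max (1+2*u) 0)^2/12) = ENNReal.ofReal (1/72) := by
  have h2 : (-(1/2) : ℝ) ≤ 0 := by norm_num
  rw [← Iic_union_Ioc_eq_Iic h2, lintegral_union measurableSet_Ioc (Iic_disjoint_Ioc le_rfl)]
  rw [show (∫⁻ u in Iic (-(1/2):ℝ), ENNReal.ofReal ((max (1+2*u) 0)^2/12)) =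
      ∫⁻ _ in Iic (-(1/2):ℝ), 0 from
    setLIntegral_congr_fun measurableSet_Iic (fun u hu => by
      have hu' : (1+2*u : ℝ) ≤ 0 := by have := mem_Iic.mp hu; linarith
      rw [max_eq_right hu']; norm_num)]
  rw [lintegral_zero, zero_add]
  rw [show (∫⁻ u in Ioc (-(1/2):ℝ) 0, ENNReal.ofReal ((max (1+2*u) 0)^2/12)) =
      ∫⁻ u in Ioc (-(1/2):ℝ) 0, ENNReal.ofReal ((1+2*u)^2/12) from
    setLIntegral_congr_fun measurableSet_Ioc (fun u hu => by
      have hu' : (0:ℝ) ≤ 1+2*u := by have := (mem_Ioc.mp hu).1; linarith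
      rw [max_eq_left hu'])]
  rw [← ofReal_integral_eq_lintegral_ofReal]
  · rw [← intervalIntegral.integral_of_le h2]
    rw [intervalIntegral.integral_eq_sub_of_hasDerivAt (f := fun u => (1+2*u)^3/72)
      (fun x _ => by
        have h : HasDerivAt (fun u : ℝ => 1+2*u) 2 x := by
          simpa using ((hasDerivAt_id x).const_mul 2).const_add 1
        have : HasDerivAt (fun u : ℝ => (1+2*u)^3/72) (↑3 * (1 + 2 * x) ^ (3 - 1) * 2 / 72) x := (h.pow 3).div_const 72
        exact this.congr_deriv (by ring))]
    · norm_num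
    · apply Continuous.intervalIntegrable; continuity
  · apply Continuous.integrableOn_Ioc; continuity
  · filter_upwards [ae_restrict_mem measurableSet_Ioc] with u hu
    positivity

def alphaS2_equiv : (Fin (2 + 1) → ℝ) ≃ᵐ ℝ × (ℝ × ℝ) :=
  (MeasurableEquiv.piFinSuccAbove (fun _ : Fin (2 + 1) => ℝ) 0).trans
    ((MeasurableEquiv.refl ℝ).prodCongr MeasurableEquiv.finTwoArrow)

lemma alphaS2_equiv_apply (x : Fin (2 + 1) → ℝ) : alphaS2_equiv x = (x 0, (x 1, x 2)) := rfl

lemma alphaS2_mp : MeasurePreserving alphaS2_equiv volume volume := by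
  refine (volume_preserving_piFinSuccAbove (fun _ : Fin (2 + 1) => ℝ) 0).trans ?_
  rw [Measure.volume_eq_prod, Measure.volume_eq_prod]
  exact (MeasurePreserving.id volume).prod (volume_preserving_finTwoArrow ℝ)

/-- The section volume. -/
lemma alphaS2_sec (u v : ℝ) :
    volume {a : ℝ | u ≤ 0 ∧ v ≤ 0 ∧ 0 ≤ a + u + v ∧ 0 ≤ 3*a + u + v ∧ 3*a + u + v ≤ 1}
      = if u ≤ 0 ∧ v ≤ 0 then ENNReal.ofReal ((1 + 2*u + 2*v)/3) else 0 := by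
  split_ifs with h
  · obtain ⟨hu, hv⟩ := h
    have hset : {a : ℝ | u ≤ 0 ∧ v ≤ 0 ∧ 0 ≤ a + u + v ∧ 0 ≤ 3*a + u + v ∧ 3*a + u + v ≤ 1}
        = Icc (-u - v) ((1 - u - v)/3) := by
      ext a
      simp only [mem_setOf_eq, mem_Icc]
      constructor
      · rintro ⟨-, -, h1, -, h3⟩; constructor <;> linarith
      · rintro ⟨h1, h2⟩
        refine ⟨hu, hv, by linarith, by linarith, by linarith⟩
    rw [hset, Real.volume_Icc]
    congr 1; ring
  · have hset : {a : ℝ | u ≤ 0 ∧ v ≤ 0 ∧ 0 ≤ a + u + v ∧ 0 ≤ 3*a + u + v ∧ 3*a + u + v ≤ 1}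
        = (∅ : Set ℝ) := by
      ext a
      simp only [mem_setOf_eq, mem_empty_iff_false, iff_false]
      rintro ⟨h1, h2, -⟩
      exact h ⟨h1, h2⟩
    rw [hset]
    simp

theorem alpha_S2 :
    3 * (volume {x : Fin (2 + 1) → ℝ | x ∈ NefCone 2 ∧
      0 ≤ interR (antiKR 2) x ∧ interR (antiKR 2) x ≤ 1}).toReal = 1 / 24 := by
  -- rewrite the set via the classification
  have hK : ∀ x : Fin (2 + 1) → ℝ, interR (antiKR 2) x = 3 * x 0 + x 1 + x 2 := by
    intro x; simp [interR, antiKR, Fin.sum_univ_succ]; ring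
  have hset : {x : Fin (2 + 1) → ℝ | x ∈ NefCone 2 ∧
      0 ≤ interR (antiKR 2) x ∧ interR (antiKR 2) x ≤ 1}
      = {x : Fin (2 + 1) → ℝ | x 1 ≤ 0 ∧ x 2 ≤ 0 ∧ 0 ≤ x 0 + x 1 + x 2 ∧
          0 ≤ 3 * x 0 + x 1 + x 2 ∧ 3 * x 0 + x 1 + x 2 ≤ 1} := by
    ext x
    simp only [mem_setOf_eq, NefCone, hK]
    constructor
    · rintro ⟨hnef, h1, h2⟩
      have hA := hnef ![0, 1, 0] (by constructor <;> decide)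
      have hB := hnef ![0, 0, 1] (by constructor <;> decide)
      have hC := hnef ![1, -1, -1] (by constructor <;> decide)
      simp [interR, Fin.sum_univ_succ] at hA hB hC
      refine ⟨by linarith, by linarith, by linarith, h1, h2⟩
    · rintro ⟨h1, h2, h3, h4, h5⟩
      refine ⟨?_, h4, h5⟩
      intro E hE
      rcases alphaS2_classify hE with ⟨e0, e1, e2⟩ | ⟨e0, e1, e2⟩ | ⟨e0, e1, e2⟩ <;>
        · simp [interR, Fin.sum_univ_succ, e0, e1, e2]; try linarith
  rw [hset]
  -- transfer to ℝ × ℝ × ℝ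
  set T : Set (ℝ × ℝ × ℝ) := {p | p.2.1 ≤ 0 ∧ p.2.2 ≤ 0 ∧ 0 ≤ p.1 + p.2.1 + p.2.2 ∧
      0 ≤ 3 * p.1 + p.2.1 + p.2.2 ∧ 3 * p.1 + p.2.1 + p.2.2 ≤ 1} with hT
  have hTmeas : MeasurableSet T := by
    rw [hT]
    simp only [setOf_and]
    repeat' apply MeasurableSet.inter
    all_goals (apply measurableSet_le <;> fun_prop)
  have hpre : {x : Fin (2 + 1) → ℝ | x 1 ≤ 0 ∧ x 2 ≤ 0 ∧ 0 ≤ x 0 + x 1 + x 2 ∧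
      0 ≤ 3 * x 0 + x 1 + x 2 ∧ 3 * x 0 + x 1 + x 2 ≤ 1} = alphaS2_equiv ⁻¹' T := by
    ext x; simp [alphaS2_equiv_apply, hT, mem_preimage]
  rw [hpre, alphaS2_mp.measure_preimage hTmeas.nullMeasurableSet]
  -- Fubini
  have hvol : volume T = ENNReal.ofReal (1/72) := by
    rw [Measure.volume_eq_prod, Measure.prod_apply_symm hTmeas]
    have hsec : ∀ y : ℝ × ℝ, ((fun x => (x, y)) ⁻¹' T) =
        {a : ℝ | y.1 ≤ 0 ∧ y.2 ≤ 0 ∧ 0 ≤ a + y.1 + y.2 ∧ 0 ≤ 3*a + y.1 + y.2 ∧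
          3*a + y.1 + y.2 ≤ 1} := by
      intro y; ext a; simp [hT]
    simp_rw [hsec, alphaS2_sec]
    rw [Measure.volume_eq_prod, lintegral_prod]
    · have hinner : ∀ u : ℝ, (∫⁻ v : ℝ, if u ≤ 0 ∧ v ≤ 0 then
          ENNReal.ofReal ((1 + 2*u + 2*v)/3) else 0)
          = if u ≤ 0 then ENNReal.ofReal ((max (1 + 2*u) 0)^2/12) else 0 := by
        intro u
        by_cases hu : u ≤ 0
        · simp only [hu, true_and, if_true]
          have : (fun v : ℝ => if v ≤ 0 then ENNReal.ofReal ((1 + 2*u + 2*v)/3) else 0)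
              = (Iic (0:ℝ)).indicator (fun v => ENNReal.ofReal ((1 + 2*u + 2*v)/3)) := by
            funext v; simp [indicator_apply, mem_Iic]
          rw [this, lintegral_indicator measurableSet_Iic]
          have := alphaS2_L1 (1 + 2*u)
          simpa [show ∀ v : ℝ, (1 + 2*u) + 2*v = 1 + 2*u + 2*v from fun v => by ring] using this
        · simp [hu]
      simp_rw [hinner]
      have : (fun u : ℝ => if u ≤ 0 then ENNReal.ofReal ((max (1 + 2*u) 0)^2/12) else 0)
          = (Iic (0:ℝ)).indicator (fun u => ENNReal.ofReal ((max (1 + 2*u) 0)^2/12)) := by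
        funext u; simp [indicator_apply, mem_Iic]
      rw [this, lintegral_indicator measurableSet_Iic, alphaS2_L2]
    · apply Measurable.aemeasurable
      apply Measurable.ite
      · simp only [setOf_and]
        apply MeasurableSet.inter <;> (apply measurableSet_le <;> fun_prop)
      · exact ENNReal.measurable_ofReal.comp (by fun_prop)
      · exact measurable_const
  rw [hvol, ENNReal.toReal_ofReal (by norm_num)]
  norm_num
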